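/- arXiv:1310.5363 — 4 statements merged into one kernel-verified Lean document; each statement's English description precedes it below -/
import Mathlib

section
/- For every integer n ≥ 2, f(n) ≥ 2^(2^(n-2)). In particular f(n) ≥ 2 for n ≥ 2. -/
/-- An equation from `E_n`: `x_k = 1`, `x_i + x_j = x_k`, or `x_i * x_j = x_k`. -/
inductive Eqn (n : ℕ) : Type where
  | one (k : Fin n)
  | add (i j k : Fin n)
  | mul (i j k : Fin n)

def Eqn.holds {n : ℕ} (x : Fin n → ℕ) : Eqn n → Prop
  | .one k => x k = 1
  | .add i j k => x i + x j = x k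
  | .mul i j k => x i * x j = x k

/-- `x` solves the system `S ⊆ E_n`. -/
def Solves {n : ℕ} (x : Fin n → ℕ) (S : Set (Eqn n)) : Prop :=
  ∀ e ∈ S, e.holds x

/-- Every solvable system `S ⊆ E_n` has a solution with all values `≤ b`. -/
def IsBound (n b : ℕ) : Prop :=
  ∀ S : Set (Eqn n), (∃ x, Solves x S) → ∃ x, Solves x S ∧ ∀ i, x i ≤ b

/-- `f n` is the smallest such bound. -/
noncomputable def f (n : ℕ) : ℕ := sInf {b | IsBound n b}

/-- `y` is a duplicate of `x`. -/
def Dup {n : ℕ} (x y : Fin n → ℕ) : Prop :=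
  (∀ k, x k = 1 → y k = 1) ∧
  (∀ i j k, x i + x j = x k → y i + y j = y k) ∧
  (∀ i j k, x i * x j = x k → y i * y j = y k)

/-- Every `x : ℕⁿ` has a duplicate in `{0,…,b}ⁿ`. -/
def DupBound (n b : ℕ) : Prop :=
  ∀ x : Fin n → ℕ, ∃ y, Dup x y ∧ ∀ i, y i ≤ b

/-- `f` expressed via duplicates. -/
noncomputable def fdup (n : ℕ) : ℕ := sInf {b | DupBound n b}

/-- `g n m` : smallest `b` such that every `x ∈ {0,…,m-1}ⁿ` has a duplicate in `{0,…,b}ⁿ`. -/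
noncomputable def g (n m : ℕ) : ℕ :=
  sInf {b | ∀ x : Fin n → ℕ, (∀ i, x i < m) → ∃ y, Dup x y ∧ ∀ i, y i ≤ b}


instance (n : ℕ) : Finite (Eqn n) := by
  apply Finite.of_injective (fun e : Eqn n =>
    match e with
    | .one k => ((0 : Fin 3), k, k, k)
    | .add i j k => ((1 : Fin 3), i, j, k)
    | .mul i j k => ((2 : Fin 3), i, j, k))
  rintro (a | ⟨a,b,c⟩ | ⟨a,b,c⟩) (d | ⟨d,e,f⟩ | ⟨d,e,f⟩) h <;> simp_all

lemma exists_isBound (n : ℕ) : ∃ b, IsBound n b := by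
  classical
  set F : Set (Eqn n) → ℕ := fun S =>
    if h : ∃ x, Solves x S then Finset.univ.sup (Classical.choose h) else 0 with hF
  obtain ⟨b, hb⟩ := Set.Finite.bddAbove (Set.finite_range F)
  refine ⟨b, fun S hS => ?_⟩
  refine ⟨Classical.choose hS, Classical.choose_spec hS, fun i => ?_⟩
  have h1 : Classical.choose hS i ≤ F S := by
    rw [hF]; simp only [hS, dif_pos]
    exact Finset.le_sup (Finset.mem_univ i)
  exact h1.trans (hb (Set.mem_range_self S))

lemma key_pow (m : ℕ) : 2 ^ 2 ^ m * 2 ^ 2 ^ m = 2 ^ 2 ^ (m + 1) := by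
  rw [← pow_add, pow_succ]
  congr 1
  omega

theorem stmt2 (n : ℕ) (hn : 2 ≤ n) :
    2 ^ (2 ^ (n - 2)) ≤ f n ∧ 2 ≤ f n := by
  have main : 2 ^ (2 ^ (n - 2)) ≤ f n := by
    obtain ⟨b0, hb0⟩ := exists_isBound n
    apply le_csInf ⟨b0, Set.mem_setOf.mpr hb0⟩
    intro b hb
    -- the rigid system
    set S : Set (Eqn n) := {e | e = .one ⟨0, by omega⟩ ∨
        e = .add ⟨0, by omega⟩ ⟨0, by omega⟩ ⟨1, by omega⟩ ∨
        ∃ m : ℕ, ∃ h : m + 2 < n, e = .mul ⟨m+1, by omega⟩ ⟨m+1, by omega⟩ ⟨m+2, h⟩} with hSdef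
    have hsolv : ∃ x, Solves x S := by
      refine ⟨fun i => if i.val = 0 then 1 else 2 ^ 2 ^ (i.val - 1), ?_⟩
      rintro e (rfl | rfl | ⟨m, h, rfl⟩) <;> simp [Eqn.holds]
      exact key_pow m
    obtain ⟨y, hy, hyb⟩ := hb S hsolv
    have h0 : y ⟨0, by omega⟩ = 1 := hy _ (Or.inl rfl)
    have hstep : ∀ m : ℕ, ∀ h : m + 1 < n, y ⟨m + 1, h⟩ = 2 ^ 2 ^ m := by
      intro m
      induction m with
      | zero =>
        intro h
        have h2 := hy _ (Or.inr (Or.inl rfl))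
        simp only [Eqn.holds, h0] at h2
        show y ⟨1, h⟩ = 2 ^ 2 ^ 0
        rw [← h2]
        norm_num
      | succ k ih =>
        intro h
        have hk : k + 1 < n := by omega
        have := hy _ (Or.inr (Or.inr ⟨k, by omega, rfl⟩))
        simp only [Eqn.holds] at this
        rw [ih hk] at this
        rw [← this, key_pow]
    have hn1 : n - 2 + 1 < n := by omega
    have := hstep (n - 2) hn1
    calc 2 ^ 2 ^ (n - 2) = y ⟨n - 2 + 1, hn1⟩ := this.symm
      _ ≤ b := hyb _
  refine ⟨main, le_trans ?_ main⟩
  have : 1 ≤ 2 ^ (n - 2) := Nat.one_le_two_pow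
  calc 2 = 2 ^ 1 := (pow_one 2).symm
    _ ≤ 2 ^ 2 ^ (n - 2) := Nat.pow_le_pow_right (by norm_num) this
end

section
/- With f and g as defined, for every positive integer n: g(n, f(n)) < f(n), and g(n, m) = f(n) for all m ≥ f(n) + 1. -/
instance {n : ℕ} : Finite (Eqn n) := by
  have hinj : Function.Injective (fun e : Eqn n => match e with
    | .one k => Sum.inl k
    | .add i j k => Sum.inr (Sum.inl (i, j, k))
    | .mul i j k => Sum.inr (Sum.inr (i, j, k))) := by
    intro a b h
    cases a <;> cases b <;> simp_all
  exact Finite.of_injective _ hinj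

lemma dup_refl {n : ℕ} (x : Fin n → ℕ) : Dup x x :=
  ⟨fun _ h => h, fun _ _ _ h => h, fun _ _ _ h => h⟩

lemma dup_trans {n : ℕ} {x y z : Fin n → ℕ} (h1 : Dup x y) (h2 : Dup y z) : Dup x z :=
  ⟨fun k h => h2.1 k (h1.1 k h), fun i j k h => h2.2.1 i j k (h1.2.1 i j k h),
   fun i j k h => h2.2.2 i j k (h1.2.2 i j k h)⟩

lemma exists_dupBound (n : ℕ) : ∃ b, DupBound n b := by
  classical
  obtain ⟨M, hM⟩ := Finite.exists_le (fun S : Set (Eqn n) =>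
    Finset.univ.sup (if h : ∃ x' : Fin n → ℕ, {e : Eqn n | e.holds x'} = S then h.choose
      else fun _ => 0))
  refine ⟨M, fun x => ?_⟩
  set S : Set (Eqn n) := {e | e.holds x} with hS
  have h : ∃ x' : Fin n → ℕ, {e : Eqn n | e.holds x'} = S := ⟨x, rfl⟩
  have hy : {e : Eqn n | e.holds h.choose} = S := h.choose_spec
  have himp : ∀ e : Eqn n, e.holds x → e.holds h.choose := by
    intro e he
    have : e ∈ S := he
    rw [← hy] at this
    exact this
  refine ⟨h.choose, ⟨fun k hk => himp (.one k) hk, fun i j k hk => himp (.add i j k) hk,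
    fun i j k hk => himp (.mul i j k) hk⟩, fun i => ?_⟩
  have h1 : h.choose i ≤ Finset.univ.sup h.choose := Finset.le_sup (Finset.mem_univ i)
  have h2 := hM S
  rw [dif_pos h] at h2
  exact h1.trans h2

theorem stmt10 (n : ℕ) (hn : 0 < n) :
    g n (fdup n) < fdup n ∧ ∀ m : ℕ, fdup n + 1 ≤ m → g n m = fdup n := by
  classical
  have hne : {b | DupBound n b}.Nonempty := exists_dupBound n
  have hmem : DupBound n (fdup n) := Nat.sInf_mem hne
  have hpos : 1 ≤ fdup n := by
    by_contra h
    push_neg at h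
    have h0 : fdup n = 0 := Nat.lt_one_iff.mp h
    rw [h0] at hmem
    obtain ⟨y, hy, hyb⟩ := hmem (fun _ => 1)
    have h1 := hy.1 ⟨0, hn⟩ rfl
    have h2 := hyb ⟨0, hn⟩
    omega
  constructor
  · have hle : g n (fdup n) ≤ fdup n - 1 := Nat.sInf_le (by
      intro x hx
      exact ⟨x, dup_refl x, fun i => by have := hx i; omega⟩)
    omega
  · intro m hm
    apply le_antisymm
    · exact Nat.sInf_le (fun x _ => hmem x)
    · by_contra h
      push_neg at h
      have hgne : {b | ∀ x : Fin n → ℕ, (∀ i, x i < m) → ∃ y, Dup x y ∧ ∀ i, y i ≤ b}.Nonempty :=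
        ⟨fdup n, fun x _ => hmem x⟩
      have hg := Nat.sInf_mem hgne
      have hnb : ¬ DupBound n (g n m) := fun hb => Nat.not_lt.2 (Nat.sInf_le hb) h
      apply hnb
      intro x
      obtain ⟨y, hxy, hyb⟩ := hmem x
      obtain ⟨z, hyz, hzb⟩ := hg y (fun i => by have := hyb i; omega)
      exact ⟨z, dup_trans hxy hyz, hzb⟩
end

section
/- For every positive integer n, the limit of g(n,m) as m → ∞ exists and equals f(n); in particular, f is limit-computable via the computable double sequence g. -/
instance eqnFinite (n : ℕ) : Finite (Eqn n) := by
  apply Finite.of_injective (fun e : Eqn n =>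
    match e with
    | .one k => ((0 : Fin 3), k, k, k)
    | .add i j k => ((1 : Fin 3), i, j, k)
    | .mul i j k => ((2 : Fin 3), i, j, k))
  intro a b hab
  cases a <;> cases b <;> simp_all

theorem stmt11 (n : ℕ) (hn : 0 < n) :
    Filter.Tendsto (g n) Filter.atTop (nhds (fdup n)) := by
  classical
  have hne : {b | DupBound n b}.Nonempty := exists_dupBound n
  have hmem : DupBound n (fdup n) := Nat.sInf_mem hne
  -- for each b < fdup n, a witness x with no duplicate bounded by b
  have hwit : ∀ b, b < fdup n → ∃ x : Fin n → ℕ, ∀ y, Dup x y → ∃ i, b < y i := by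
    intro b hb
    have hnb : ¬ DupBound n b := by
      intro h
      have h2 : fdup n ≤ b := Nat.sInf_le h
      omega
    unfold DupBound at hnb
    push_neg at hnb
    obtain ⟨x, hx⟩ := hnb
    exact ⟨x, hx⟩
  let xw : ℕ → (Fin n → ℕ) := fun b =>
    if hb : b < fdup n then (hwit b hb).choose else fun _ => 0
  let M : ℕ := (Finset.range (fdup n)).sup (fun b => Finset.univ.sup (fun i => xw b i)) + 1
  have hconst : ∀ m, M ≤ m → g n m = fdup n := by
    intro m hm
    have hgle : g n m ≤ fdup n := Nat.sInf_le (fun x _ => hmem x)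
    have hgmem : g n m ∈ {b | ∀ x : Fin n → ℕ, (∀ i, x i < m) →
        ∃ y, Dup x y ∧ ∀ i, y i ≤ b} :=
      Nat.sInf_mem ⟨fdup n, fun x _ => hmem x⟩
    by_contra hne'
    have hblt : g n m < fdup n := lt_of_le_of_ne hgle hne'
    -- the witness for b = g n m has all entries < m
    have hxlt : ∀ i, xw (g n m) i < m := by
      intro i
      have h1 : xw (g n m) i ≤ M - 1 :=
        le_trans (Finset.le_sup (Finset.mem_univ i))
          (Nat.le_sub_one_of_lt (Nat.lt_succ_of_le
            (Finset.le_sup (f := fun b => Finset.univ.sup (fun i => xw b i))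
              (Finset.mem_range.mpr hblt))))
      omega
    obtain ⟨y, hy, hyb⟩ := hgmem (xw (g n m)) hxlt
    have hspec := (hwit (g n m) hblt).choose_spec
    have : xw (g n m) = (hwit (g n m) hblt).choose := by simp [xw, dif_pos hblt]
    rw [this] at hy
    obtain ⟨i, hi⟩ := hspec y hy
    exact absurd (hyb i) (not_le.mpr hi)
  refine Filter.Tendsto.congr' ?_ tendsto_const_nhds
  filter_upwards [Filter.eventually_atTop.mpr ⟨M, hconst⟩] with m hm
  exact hm.symm
end

section
/- Assume that every computable function Γ : ℕ∖{0} → ℕ has a Diophantine graph expressible by equations from E_s: there exists s ≥ 3 and a conjunction Φ(x_1,…,x_s) of equations of the forms x_k = 1, x_i + x_j = x_k, x_i · x_j = x_k such that for all x_1, x_2 ∈ ℕ, (x_1,x_2) ∈ Γ ⟺ ∃ x_3,…,x_s ∈ ℕ, Φ(x_1,x_2,…,x_s). Then for each such Γ there exists a positive integer m such that Γ(n) < f(n) for all n ≥ m. -/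
instance inst_s12 {n : ℕ} : Finite (Eqn n) := by
  have hinj : Function.Injective (fun e : Eqn n =>
      match e with
      | .one k => Sum.inl k
      | .add i j k => Sum.inr (Sum.inl (i, j, k))
      | .mul i j k => Sum.inr (Sum.inr (i, j, k)) :
      Eqn n → Fin n ⊕ ((Fin n × Fin n × Fin n) ⊕ (Fin n × Fin n × Fin n))) := by
    intro a b hab
    cases a <;> cases b <;> simp_all
  exact Finite.of_injective _ hinj

def liftEqn {a b : ℕ} (h : a ≤ b) : Eqn a → Eqn b
  | .one k => .one (Fin.castLE h k)
  | .add i j k => .add (Fin.castLE h i) (Fin.castLE h j) (Fin.castLE h k)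
  | .mul i j k => .mul (Fin.castLE h i) (Fin.castLE h j) (Fin.castLE h k)

lemma holds_liftEqn {a b : ℕ} (h : a ≤ b) (x : Fin b → ℕ) (e : Eqn a) :
    (liftEqn h e).holds x ↔ e.holds (fun i => x (Fin.castLE h i)) := by
  cases e <;> rfl

def idxF (n : ℕ) (hn : 0 < n) (i : ℕ) : Fin n := ⟨min i (n-1), by omega⟩

lemma idxF_val {n : ℕ} (hn : 0 < n) {i : ℕ} (h : i ≤ n - 1) :
    ((idxF n hn i : Fin n) : ℕ) = i := by simp [idxF]; omega

lemma idxF_castLE {n a : ℕ} (hn : 0 < n) (hsn : a ≤ n) {i : ℕ} (h : i < a) (h' : a ≤ n) :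
    Fin.castLE h' (⟨i, h⟩ : Fin a) = idxF n hn i := by
  have : i ≤ n - 1 := by omega
  ext
  simp [idxF]
  omega

theorem stmt12 (Γ : ℕ → ℕ)
    (hΓ : ∃ s : ℕ, ∃ Φ : Set (Eqn (s + 3)), ∀ x1 x2 : ℕ, 0 < x1 →
      (Γ x1 = x2 ↔ ∃ x : Fin (s + 3) → ℕ,
        x ⟨0, by omega⟩ = x1 ∧ x ⟨1, by omega⟩ = x2 ∧ Solves x Φ)) :
    ∃ m : ℕ, 0 < m ∧ ∀ n : ℕ, m ≤ n → Γ n < f n := by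
  classical
  obtain ⟨s, Φ, hΦ⟩ := hΓ
  refine ⟨2*s+8, by omega, ?_⟩
  intro n hn
  have hn0 : 0 < n := by omega
  have hsn : s + 3 ≤ n := by omega
  set idx : ℕ → Fin n := idxF n hn0 with hidxdef
  have hidx : ∀ {i : ℕ}, i ≤ n - 1 → ((idx i : Fin n) : ℕ) = i :=
    fun h => idxF_val hn0 h
  -- the system
  set S : Set (Eqn n) :=
    (liftEqn hsn '' Φ) ∪ {Eqn.one (idx (s+4))}
    ∪ {e | ∃ j, 1 ≤ j ∧ j + 1 ≤ n - s - 4 ∧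
        e = Eqn.add (idx (s+3+j)) (idx (s+4)) (idx (s+4+j))}
    ∪ {Eqn.add (idx (n-1)) (idx (2*s+7)) (idx 0)}
    ∪ {Eqn.add (idx 1) (idx (s+4)) (idx (s+3))} with hSdef
  -- solvability
  obtain ⟨w, hw0, hw1, hwΦ⟩ := (hΦ n (Γ n) hn0).mp rfl
  set xs : Fin n → ℕ := fun i => if h : (i:ℕ) < s+3 then w ⟨i, h⟩ else
      if (i:ℕ) = s+3 then Γ n + 1 else (i:ℕ) - (s+3) with hxs
  have hxsw : ∀ k : Fin (s+3), xs (Fin.castLE hsn k) = w k := by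
    intro k
    simp only [hxs]
    rw [dif_pos (show ((Fin.castLE hsn k : Fin n) : ℕ) < s+3 from k.isLt)]
    exact congrArg w (Fin.ext rfl)
  have hxsmall : ∀ (i : ℕ) (h : i < s + 3), xs (idx i) = w ⟨i, h⟩ := by
    intro i h
    rw [hidxdef, ← idxF_castLE hn0 hsn h hsn, hxsw]
  have hxsbig : ∀ i, s + 3 < i → i ≤ n - 1 → xs (idx i) = i - (s+3) := by
    intro i h1 h2
    simp only [hxs]
    rw [dif_neg (by rw [hidx h2]; omega), if_neg (by rw [hidx h2]; omega), hidx h2]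
  have hxmid : xs (idx (s+3)) = Γ n + 1 := by
    simp only [hxs]
    rw [dif_neg (by rw [hidx (by omega)]; omega), if_pos (hidx (by omega))]
  have hsol : ∃ x, Solves x S := by
    refine ⟨xs, ?_⟩
    intro e he
    rcases he with (((he | he) | he) | he) | he
    · obtain ⟨e', he', rfl⟩ := he
      rw [holds_liftEqn]
      rw [funext hxsw]
      exact hwΦ e' he'
    · rw [Set.mem_singleton_iff] at he; subst he
      show xs (idx (s+4)) = 1
      rw [hxsbig (s+4) (by omega) (by omega)]
      omega
    · obtain ⟨j, hj1, hjc, rfl⟩ := he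
      show xs (idx (s+3+j)) + xs (idx (s+4)) = xs (idx (s+4+j))
      rw [hxsbig (s+3+j) (by omega) (by omega), hxsbig (s+4) (by omega) (by omega),
        hxsbig (s+4+j) (by omega) (by omega)]
      omega
    · rw [Set.mem_singleton_iff] at he; subst he
      show xs (idx (n-1)) + xs (idx (2*s+7)) = xs (idx 0)
      rw [hxsbig (n-1) (by omega) (by omega), hxsbig (2*s+7) (by omega) (by omega),
        hxsmall 0 (by omega), hw0]
      omega
    · rw [Set.mem_singleton_iff] at he; subst he
      show xs (idx 1) + xs (idx (s+4)) = xs (idx (s+3))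
      rw [hxsmall 1 (by omega), hxsbig (s+4) (by omega) (by omega), hxmid, hw1]
      omega
  -- forcing
  have hforce : ∀ y : Fin n → ℕ, Solves y S → y (idx (s+3)) = Γ n + 1 := by
    intro y hy
    have h1 : y (idx (s+4)) = 1 :=
      hy _ (Set.mem_union_left _ (Set.mem_union_left _ (Set.mem_union_left _
        (Set.mem_union_right _ rfl))))
    have hchain : ∀ j, 1 ≤ j → j ≤ n - s - 4 → y (idx (s+3+j)) = j := by
      intro j
      induction j with
      | zero => omega
      | succ j ih =>
        intro hj1 hjc
        rcases Nat.eq_zero_or_pos j with hj0 | hj0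
        · subst hj0
          simpa using h1
        · have hadd : y (idx (s+3+j)) + y (idx (s+4)) = y (idx (s+4+j)) :=
            hy _ (Set.mem_union_left _ (Set.mem_union_left _ (Set.mem_union_right _
              ⟨j, hj0, by omega, rfl⟩)))
          have heq : s + 4 + j = s + 3 + (j+1) := by omega
          rw [heq] at hadd
          rw [← hadd, ih hj0 (by omega), h1]
    have h0 : y (idx 0) = n := by
      have hadd : y (idx (n-1)) + y (idx (2*s+7)) = y (idx 0) :=
        hy _ (Set.mem_union_left _ (Set.mem_union_right _ rfl))
      have e1 : n - 1 = s + 3 + (n - s - 4) := by omega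
      have e2 : 2*s+7 = s + 3 + (s + 4) := by omega
      rw [e1, e2] at hadd
      rw [hchain _ (by omega) (by omega), hchain _ (by omega) (by omega)] at hadd
      omega
    have hGy : Γ n = y (idx 1) := by
      refine (hΦ n (y (idx 1)) hn0).mpr
        ⟨fun i => y (Fin.castLE hsn i), ?_, ?_, ?_⟩
      · show y (Fin.castLE hsn ⟨0, by omega⟩) = n
        rw [idxF_castLE hn0 hsn (by omega) hsn]
        exact h0
      · show y (Fin.castLE hsn ⟨1, by omega⟩) = y (idx 1)
        rw [idxF_castLE hn0 hsn (by omega) hsn]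
      · intro e he
        have := hy _ (Set.mem_union_left _ (Set.mem_union_left _ (Set.mem_union_left _
          (Set.mem_union_left _ ⟨e, he, rfl⟩))))
        exact (holds_liftEqn hsn y e).mp this
    have hadd : y (idx 1) + y (idx (s+4)) = y (idx (s+3)) :=
      hy _ (Set.mem_union_right _ rfl)
    rw [← hadd, ← hGy, h1]
  -- conclude
  have hfB : IsBound n (f n) := Nat.sInf_mem (exists_isBound n)
  obtain ⟨y, hyS, hyb⟩ := hfB S hsol
  have := hyb (idx (s+3))
  rw [hforce y hyS] at this
  omega
end
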